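/- arXiv:math/0511186 — 2 statements merged into one kernel-verified Lean document; each statement's English description precedes it below -/
import Mathlib

section
/- Let d ≥ 2 and C > 0. There exists λ_0 > 0 such that for every λ ∈ (0, λ_0] and every a ≥ π_d^{−1/d}, μ_λ({ζ : R_0(ζ) > a}) ≤ exp(−C·a^d), where μ_λ is the product probability measure on ℕ^{ℤ^d} whose coordinates ζ(j), j ∈ ℤ^d, are i.i.d. Poisson with parameter λ. -/
open MeasureTheory
open scoped ENNReal NNReal

noncomputable section

/-- The level-`m` cube `K_i^m` in `ℝ^d`:
`K_i^m = {x : |x^(l) - m·i^(l)| ≤ m/2 for all l}`. -/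
def cube (d : ℕ) (m : ℝ) (i : Fin d → ℤ) : Set (EuclideanSpace ℝ (Fin d)) :=
  {x | ∀ l, |x l - m * (i l : ℝ)| ≤ m / 2}

/-- The distance `ρ(A,B) = inf {|x - y| : x ∈ A, y ∈ B}` between two sets. -/
def rho (d : ℕ) (A B : Set (EuclideanSpace ℝ (Fin d))) : ℝ :=
  sInf (Set.image2 dist A B)

/-- The discrete ball `B_i(r)`: the union of the level-1 cubes `K_j^1` with
`ρ(K_i^1, K_j^1) ≤ r` (and `B_i(0) = ∅`). -/
def dball (d : ℕ) (i : Fin d → ℤ) (r : ℝ) : Set (EuclideanSpace ℝ (Fin d)) :=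
  if 0 < r then
    ⋃ j ∈ {j : Fin d → ℤ | rho d (cube d 1 i) (cube d 1 j) ≤ r}, cube d 1 j
  else ∅

/-- `π_d`, the Lebesgue volume of the unit Euclidean ball in `ℝ^d`. -/
def unitBallVol (d : ℕ) : ℝ :=
  (volume (Metric.ball (0 : EuclideanSpace ℝ (Fin d)) 1)).toReal

/-- `β_d = ⌈3 + 2√d · π_d^(1/d)⌉`. -/
def betaD (d : ℕ) : ℝ :=
  (⌈3 + 2 * Real.sqrt d * (unitBallVol d) ^ ((1 : ℝ) / d)⌉ : ℤ)

/-- The embedding of `ℤ^d` into `ℝ^d`. -/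
def embedZ (d : ℕ) (i : Fin d → ℤ) : EuclideanSpace ℝ (Fin d) :=
  WithLp.toLp 2 (fun l => (i l : ℝ))

/-- `A(K_j^m)`: the union of `K_j^m` with its `3^d - 1` neighbouring level-`m`
cubes, i.e. the cubes `K_i^m` with `‖i - j‖_∞ ≤ 1`. -/
def nbhd (d : ℕ) (m : ℝ) (j : Fin d → ℤ) : Set (EuclideanSpace ℝ (Fin d)) :=
  ⋃ i ∈ {i : Fin d → ℤ | ‖i - j‖ ≤ 1}, cube d m i

/-- The radius `R_i(ζ) = inf {r > 0 : Σ_{j : ρ(K_j^1,K_i^1) ≤ β_d r} ζ(j) ≤ π_d r^d}`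
if `ζ i > 0` (with `inf ∅ = +∞`, so the value is taken in `ℝ≥0∞`), and `R_i(ζ) = 0`
if `ζ i = 0`. -/
def Rad (d : ℕ) (ζ : (Fin d → ℤ) → ℕ) (i : Fin d → ℤ) : ℝ≥0∞ :=
  if ζ i = 0 then 0
  else sInf {t : ℝ≥0∞ | ∃ r : ℝ, 0 < r ∧ t = ENNReal.ofReal r ∧
    ((∑ᶠ j ∈ {j : Fin d → ℤ |
        rho d (cube d 1 j) (cube d 1 i) ≤ betaD d * r}, ζ j : ℕ) : ℝ)
      ≤ unitBallVol d * r ^ d}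

/-- The sup norm `‖x‖_∞` on `ℝ^d`. -/
def supNorm (d : ℕ) (x : EuclideanSpace ℝ (Fin d)) : ℝ := ⨆ l, |x l|

/-- The Poisson mass function with parameter `λ`: `n ↦ e^{−λ} λ^n / n!`. -/
def poissonPMFR (lam : ℝ) (n : ℕ) : ℝ := Real.exp (-lam) * lam ^ n / n.factorial

/-- `μ` is the product probability measure on `ℕ^{ℤ^d}` whose coordinates
`ζ(j)`, `j ∈ ℤ^d`, are i.i.d. Poisson with parameter `λ`, characterized by its
values on cylinder events. -/
def IsIIDPoisson (d : ℕ) (lam : ℝ) (μ : Measure ((Fin d → ℤ) → ℕ)) : Prop :=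
  IsProbabilityMeasure μ ∧
  ∀ (F : Finset (Fin d → ℤ)) (k : (Fin d → ℤ) → ℕ),
    μ {ζ | ∀ j ∈ F, ζ j = k j} = ∏ j ∈ F, ENNReal.ofReal (poissonPMFR lam (k j))


-- Auxiliary lemmas
lemma unitBallVol_pos (d : ℕ) (hd : 0 < d) : 0 < unitBallVol d := by
  have : Nonempty (Fin d) := ⟨⟨0, hd⟩⟩
  apply ENNReal.toReal_pos
  · exact (Metric.measure_ball_pos volume 0 one_pos).ne'
  · exact (measure_ball_lt_top).ne

lemma betaD_ge (d : ℕ) : (3:ℝ) ≤ betaD d := by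
  have h : (0:ℝ) ≤ 2 * Real.sqrt d * (unitBallVol d) ^ ((1 : ℝ) / d) :=
    mul_nonneg (mul_nonneg (by norm_num) (Real.sqrt_nonneg _))
      (Real.rpow_nonneg ENNReal.toReal_nonneg _)
  have := Int.le_ceil (3 + 2 * Real.sqrt d * (unitBallVol d) ^ ((1 : ℝ) / d))
  unfold betaD
  linarith

lemma embedZ_mem_cube (d : ℕ) (j : Fin d → ℤ) : embedZ d j ∈ cube d 1 j := by
  intro l
  simp [embedZ]

lemma dist_embedZ_le (d : ℕ) (j : Fin d → ℤ) (x : EuclideanSpace ℝ (Fin d))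
    (hx : x ∈ cube d 1 j) : dist x (embedZ d j) ≤ Real.sqrt d / 2 := by
  rw [EuclideanSpace.dist_eq]
  have h1 : ∑ l, dist (x l) (embedZ d j l) ^ 2 ≤ ∑ _l : Fin d, (1/2:ℝ)^2 := by
    apply Finset.sum_le_sum
    intro l _
    have := hx l
    rw [one_mul] at this
    have hd : dist (x l) (embedZ d j l) = |x l - (j l : ℝ)| := by
      rw [Real.dist_eq]; rfl
    rw [hd]
    have h0 : |x l - (j l:ℝ)| ≤ 1/2 := by simpa using this
    nlinarith [abs_nonneg (x l - (j l:ℝ))]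
  calc Real.sqrt (∑ l, dist (x l) (embedZ d j l) ^ 2)
      ≤ Real.sqrt (∑ _l : Fin d, (1/2:ℝ)^2) := Real.sqrt_le_sqrt h1
    _ = Real.sqrt d / 2 := by
        rw [Finset.sum_const, Finset.card_univ, Fintype.card_fin]
        rw [nsmul_eq_mul]
        rw [show (d:ℝ) * (1/2)^2 = d / 4 by ring]
        rw [show (d:ℝ)/4 = d * (1/2)^2 by ring, Real.sqrt_mul (by positivity),
          Real.sqrt_sq (by norm_num)]
        ring

lemma rho_ge (d : ℕ) (j : Fin d → ℤ) :
    ‖embedZ d j‖ - Real.sqrt d ≤ rho d (cube d 1 j) (cube d 1 0) := by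
  apply le_csInf
  · exact ⟨_, Set.mem_image2_of_mem (embedZ_mem_cube d j) (embedZ_mem_cube d 0)⟩
  · rintro b ⟨x, hx, y, hy, rfl⟩
    have h1 := dist_embedZ_le d j x hx
    have h2 := dist_embedZ_le d 0 y hy
    have h0 : embedZ d 0 = 0 := by ext l; simp [embedZ]
    rw [h0] at h2
    have h3 : ‖embedZ d j‖ = dist (embedZ d j) 0 := by simp
    have := dist_triangle4 (embedZ d j) x y 0
    rw [dist_comm (embedZ d j) x] at this
    rw [h3]
    have h4 : dist y 0 ≤ Real.sqrt d / 2 := by simpa [dist_comm] using h2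
    linarith

lemma coord_le_norm (d : ℕ) (x : EuclideanSpace ℝ (Fin d)) (l : Fin d) :
    |x l| ≤ ‖x‖ := by
  rw [EuclideanSpace.norm_eq]
  have h1 : |x l| = Real.sqrt (‖x l‖^2) := by
    rw [Real.sqrt_sq_eq_abs]; simp
  rw [h1]
  apply Real.sqrt_le_sqrt
  apply Finset.single_le_sum (f := fun i => ‖x i‖^2) (fun i _ => by positivity)
    (Finset.mem_univ l)


lemma tsum_pi_fin : ∀ (n : ℕ) (f : ℕ → ℝ≥0∞),
    ∑' (g : Fin n → ℕ), ∏ i, f (g i) = (∑' m, f m) ^ n := by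
  intro n
  induction n with
  | zero =>
    intro f
    rw [pow_zero]
    have : ∀ g : Fin 0 → ℕ, ∏ i, f (g i) = 1 := by
      intro g; simp
    rw [tsum_congr this]
    exact tsum_eq_single (default : Fin 0 → ℕ)
      (fun b hb => absurd (Subsingleton.elim b default) hb)
  | succ n ih =>
    intro f
    rw [← (Fin.consEquiv (fun _ => ℕ)).tsum_eq]
    have key : ∀ p : ℕ × (Fin n → ℕ),
        ∏ i, f (((Fin.consEquiv (fun _ => ℕ)) p) i) = f p.1 * ∏ i, f (p.2 i) := by
      rintro ⟨m, g⟩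
      rw [Fin.prod_univ_succ]
      simp [Fin.consEquiv]
    rw [tsum_congr key, ENNReal.tsum_prod']
    simp only []
    calc ∑' (a : ℕ) (b : Fin n → ℕ), f a * ∏ i, f (b i)
        = ∑' (a : ℕ), f a * ∑' (b : Fin n → ℕ), ∏ i, f (b i) := by
          congr 1; funext a; rw [ENNReal.tsum_mul_left]
      _ = (∑' m, f m) * (∑' m, f m)^n := by rw [ih, ENNReal.tsum_mul_right]
      _ = (∑' m, f m)^(n+1) := by ring

lemma tsum_pi_fintype {ι : Type*} [Fintype ι] (f : ℕ → ℝ≥0∞) :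
    ∑' (g : ι → ℕ), ∏ i, f (g i) = (∑' m, f m) ^ (Fintype.card ι) := by
  classical
  let e := (Fintype.equivFin ι)
  rw [← (Equiv.arrowCongr e.symm (Equiv.refl ℕ)).tsum_eq]
  rw [← tsum_pi_fin (Fintype.card ι) f]
  apply tsum_congr
  intro g
  exact Fintype.prod_equiv e _ _ (fun i => by simp [Equiv.arrowCongr])

lemma tsum_half_pow : ∑' m : ℕ, ((1:ℝ≥0∞)/2) ^ m = 2 := by
  rw [ENNReal.tsum_geometric]
  rw [show (1:ℝ≥0∞) - 1/2 = 1/2 by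
    rw [ENNReal.sub_eq_of_eq_add (by norm_num)]
    rw [show (1:ℝ≥0∞) = 2/2 by rw [ENNReal.div_self] <;> norm_num]
    rw [ENNReal.div_add_div_same]
    norm_num]
  simp [ENNReal.inv_div]


set_option maxHeartbeats 2000000

/-- Let `d ≥ 2` and `C > 0`. There exists `λ₀ > 0` such that for
every `λ ∈ (0, λ₀]` and every `a ≥ π_d^(−1/d)`,
`μ_λ({ζ : R_0(ζ) > a}) ≤ exp(−C·a^d)`, where `μ_λ` is the product probability
measure on `ℕ^{ℤ^d}` whose coordinates are i.i.d. Poisson with parameter `λ`. -/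
theorem statement9 (d : ℕ) (hd : 2 ≤ d) (C : ℝ) (hC : 0 < C) :
    ∃ lam0 : ℝ, 0 < lam0 ∧
      ∀ lam : ℝ, 0 < lam → lam ≤ lam0 →
        ∀ μ : Measure ((Fin d → ℤ) → ℕ), IsIIDPoisson d lam μ →
          ∀ a : ℝ, (unitBallVol d) ^ (-(1 : ℝ) / d) ≤ a →
            μ {ζ | ENNReal.ofReal a < Rad d ζ 0}
              ≤ ENNReal.ofReal (Real.exp (-(C * a ^ d))) := by
  classical
  have hπ : 0 < unitBallVol d := unitBallVol_pos d (by omega)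
  have hβ : (3:ℝ) ≤ betaD d := betaD_ge d
  set c : ℝ := 2 * betaD d + (2 * Real.sqrt d + 1) * (unitBallVol d) ^ ((1:ℝ)/d)
    with hcdef
  have hcpos : 0 < c := by
    have h1 : (0:ℝ) ≤ (2 * Real.sqrt d + 1) * (unitBallVol d) ^ ((1:ℝ)/d) :=
      mul_nonneg (by positivity) (Real.rpow_nonneg hπ.le _)
    have h2 : (0:ℝ) < 2 * betaD d := by linarith
    rw [hcdef]
    linarith
  set K : ℝ := c ^ d with hKdef
  have hKpos : 0 < K := pow_pos hcpos d
  have hlog2 : (0:ℝ) < Real.log 2 := Real.log_pos (by norm_num)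
  refine ⟨Real.exp (-(C + K * Real.log 2) / unitBallVol d) / 2, by positivity, ?_⟩
  intro lam hlam hlam0 μ hμ a ha
  have hd0 : (d:ℝ) ≠ 0 := by
    have : (0:ℝ) < d := by exact_mod_cast (by omega : 0 < d)
    exact this.ne'
  have hπia : 0 < (unitBallVol d) ^ (-(1:ℝ)/d) := Real.rpow_pos_of_pos hπ _
  have ha0 : 0 < a := lt_of_lt_of_le hπia ha
  -- a^d ≥ π⁻¹
  have had : (unitBallVol d)⁻¹ ≤ a ^ d := by
    have h1 : ((unitBallVol d) ^ (-(1:ℝ)/d)) ^ d ≤ a ^ d :=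
      pow_le_pow_left₀ hπia.le ha d
    have h2 : ((unitBallVol d) ^ (-(1:ℝ)/d)) ^ d = (unitBallVol d)⁻¹ := by
      rw [← Real.rpow_natCast ((unitBallVol d) ^ (-(1:ℝ)/d)) d,
        ← Real.rpow_mul hπ.le]
      rw [show (-(1:ℝ)/d) * d = -1 by field_simp]
      exact Real.rpow_neg_one _
    linarith
  set T : ℝ := unitBallVol d * a ^ d with hTdef
  have hT1 : 1 ≤ T := by
    have := mul_le_mul_of_nonneg_left had hπ.le
    rwa [mul_inv_cancel₀ hπ.ne'] at this
  have h1a : 1 ≤ (unitBallVol d) ^ ((1:ℝ)/d) * a := by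
    have h2 : (unitBallVol d) ^ ((1:ℝ)/d) * (unitBallVol d) ^ (-(1:ℝ)/d) = 1 := by
      rw [← Real.rpow_add hπ]
      rw [show (1:ℝ)/d + -(1:ℝ)/d = 0 by ring, Real.rpow_zero]
    calc (1:ℝ) = (unitBallVol d) ^ ((1:ℝ)/d) * (unitBallVol d) ^ (-(1:ℝ)/d) :=
          h2.symm
      _ ≤ (unitBallVol d) ^ ((1:ℝ)/d) * a :=
          mul_le_mul_of_nonneg_left ha (Real.rpow_nonneg hπ.le _)
  -- the finset F
  set M : ℝ := betaD d * a + Real.sqrt d with hMdef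
  have hM0 : 0 ≤ M := by
    have : 0 ≤ betaD d * a := mul_nonneg (by linarith) ha0.le
    have := Real.sqrt_nonneg (d:ℝ)
    linarith
  set G : Finset (Fin d → ℤ) :=
    Fintype.piFinset (fun _ : Fin d => Finset.Icc (-⌊M⌋) ⌊M⌋) with hGdef
  set F : Finset (Fin d → ℤ) :=
    G.filter (fun j => rho d (cube d 1 j) (cube d 1 0) ≤ betaD d * a) with hFdef
  have hset : {j : Fin d → ℤ | rho d (cube d 1 j) (cube d 1 0) ≤ betaD d * a}
      = ↑F := by
    ext j
    simp only [Set.mem_setOf_eq, hFdef, Finset.coe_filter, Finset.mem_coe]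
    constructor
    · intro hj
      refine ⟨?_, hj⟩
      have h1 : ‖embedZ d j‖ ≤ M := by
        have := rho_ge d j
        rw [hMdef]; linarith
      rw [hGdef, Fintype.mem_piFinset]
      intro l
      have h2 : |(j l : ℝ)| ≤ M := by
        have := coord_le_norm d (embedZ d j) l
        simpa [embedZ] using this.trans h1
      rw [Finset.mem_Icc]
      constructor
      · rw [neg_le, Int.le_floor]
        push_cast
        have := neg_abs_le ((j l : ℝ))
        linarith
      · rw [Int.le_floor]
        have := le_abs_self ((j l : ℝ))
        linarith
    · exact fun h => h.2
  -- cardinality bound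
  have hcard : (F.card : ℝ) ≤ K * a ^ d := by
    have h1 : F.card ≤ G.card := Finset.card_le_card (Finset.filter_subset _ _)
    have h2 : G.card = ((2*⌊M⌋+1).toNat) ^ d := by
      rw [hGdef, Fintype.card_piFinset]
      simp [Int.card_Icc]
      congr 1
      omega
    have hMfl : 0 ≤ ⌊M⌋ := Int.floor_nonneg.mpr hM0
    have h3 : (((2*⌊M⌋+1).toNat : ℝ)) ≤ 2*M+1 := by
      have h3' : ((2*⌊M⌋+1).toNat : ℤ) = 2*⌊M⌋+1 := Int.toNat_of_nonneg (by omega)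
      have h3'' : (((2*⌊M⌋+1).toNat : ℤ) : ℝ) = 2*(⌊M⌋:ℝ)+1 := by
        rw [h3']; push_cast; ring
      have hfl := Int.floor_le M
      have h3''' : (((2*⌊M⌋+1).toNat : ℝ)) = (((2*⌊M⌋+1).toNat : ℤ) : ℝ) := by
        push_cast; ring
      rw [h3''', h3'']
      linarith
    have h4 : (2*M+1 : ℝ) ≤ c * a := by
      have h5 : 2*Real.sqrt d + 1
          ≤ (2*Real.sqrt d + 1) * ((unitBallVol d) ^ ((1:ℝ)/d) * a) :=
        le_mul_of_one_le_right (by positivity) h1a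
      rw [hcdef, hMdef]
      ring_nf
      ring_nf at h5
      nlinarith
    calc (F.card : ℝ) ≤ (G.card : ℝ) := by exact_mod_cast h1
      _ = (((2*⌊M⌋+1).toNat : ℝ)) ^ d := by rw [h2]; push_cast; ring
      _ ≤ (2*M+1) ^ d := pow_le_pow_left₀ (by positivity) h3 d
      _ ≤ (c*a) ^ d := pow_le_pow_left₀ (by linarith) h4 d
      _ = K * a ^ d := by rw [hKdef, mul_pow]
  -- event inclusion
  have hincl : {ζ : (Fin d → ℤ) → ℕ | ENNReal.ofReal a < Rad d ζ 0} ⊆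
      {ζ : (Fin d → ℤ) → ℕ | T < ((∑ j ∈ F, ζ j : ℕ) : ℝ)} := by
    intro ζ hζ
    simp only [Set.mem_setOf_eq] at hζ ⊢
    by_contra hcon
    push_neg at hcon
    rcases eq_or_ne (ζ 0) 0 with h0 | h0
    · rw [Rad, if_pos h0] at hζ
      exact (ENNReal.not_lt_zero hζ)
    · rw [Rad, if_neg h0] at hζ
      have hmem : ENNReal.ofReal a ∈ {t : ℝ≥0∞ | ∃ r : ℝ, 0 < r ∧
          t = ENNReal.ofReal r ∧
          ((∑ᶠ j ∈ {j : Fin d → ℤ |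
              rho d (cube d 1 j) (cube d 1 0) ≤ betaD d * r}, ζ j : ℕ) : ℝ)
            ≤ unitBallVol d * r ^ d} := by
        refine ⟨a, ha0, rfl, ?_⟩
        rw [hset, finsum_mem_coe_finset]
        exact hcon
      exact absurd (sInf_le hmem) (not_le.mpr hζ)
  -- cylinder decomposition
  set kfun : (↥F → ℕ) → (Fin d → ℤ) → ℕ :=
    fun kk j => if h : j ∈ F then kk ⟨j, h⟩ else 0 with hkfun
  have hincl2 : {ζ : (Fin d → ℤ) → ℕ | T < ((∑ j ∈ F, ζ j : ℕ) : ℝ)} ⊆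
      ⋃ p : {kk : ↥F → ℕ // T < ((∑ j, kk j : ℕ) : ℝ)},
        {ζ | ∀ j ∈ F, ζ j = kfun p.1 j} := by
    intro ζ hζ
    simp only [Set.mem_setOf_eq] at hζ
    have hs : ((∑ j : ↥F, ζ j : ℕ) : ℝ) = ((∑ j ∈ F, ζ j : ℕ) : ℝ) := by
      congr 1
      exact Finset.sum_coe_sort F ζ
    refine Set.mem_iUnion.mpr ⟨⟨fun j => ζ j, by rw [hs]; exact hζ⟩, ?_⟩
    intro j hj
    simp [hkfun, hj]
  -- per-cylinder bound
  have h2lam : 0 < 2 * lam := by linarith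
  have h2lam1 : 2 * lam ≤ 1 := by
    have h1 : 2 * lam ≤ Real.exp (-(C + K * Real.log 2) / unitBallVol d) := by
      linarith
    have h2 : Real.exp (-(C + K * Real.log 2) / unitBallVol d) ≤ 1 := by
      rw [Real.exp_le_one_iff]
      apply div_nonpos_of_nonpos_of_nonneg
      · nlinarith
      · exact hπ.le
    linarith
  have hterm : ∀ p : {kk : ↥F → ℕ // T < ((∑ j, kk j : ℕ) : ℝ)},
      μ {ζ | ∀ j ∈ F, ζ j = kfun p.1 j} ≤
        ENNReal.ofReal ((2*lam) ^ T) * ∏ j : ↥F, ((1:ℝ≥0∞)/2) ^ (p.1 j) := by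
    rintro ⟨kk, hkk⟩
    rw [hμ.2 F (kfun kk)]
    set s : ℕ := ∑ j : ↥F, kk j with hsdef
    have hsum : ∑ j ∈ F, kfun kk j = s := by
      rw [← Finset.sum_coe_sort F (kfun kk)]
      apply Finset.sum_congr rfl
      intro j _
      simp [hkfun]
    have hpois_nonneg : ∀ n : ℕ, 0 ≤ poissonPMFR lam n := by
      intro n
      unfold poissonPMFR
      positivity
    have step1 : ∏ j ∈ F, ENNReal.ofReal (poissonPMFR lam (kfun kk j))
        = ENNReal.ofReal (∏ j ∈ F, poissonPMFR lam (kfun kk j)) :=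
      (ENNReal.ofReal_prod_of_nonneg (fun i _ => hpois_nonneg _)).symm
    have step2 : ∏ j ∈ F, poissonPMFR lam (kfun kk j) ≤ lam ^ s := by
      rw [← hsum, ← Finset.prod_pow_eq_pow_sum]
      apply Finset.prod_le_prod (fun i _ => hpois_nonneg _)
      intro i _
      unfold poissonPMFR
      rw [div_le_iff₀ (by positivity)]
      have h1 : Real.exp (-lam) ≤ 1 := Real.exp_le_one_iff.mpr (by linarith)
      have h2 : (1:ℝ) ≤ (kfun kk i).factorial :=
        Nat.one_le_cast.mpr (Nat.factorial_pos _)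
      have h3 : (0:ℝ) ≤ lam ^ (kfun kk i) := by positivity
      calc Real.exp (-lam) * lam ^ (kfun kk i) ≤ 1 * lam ^ (kfun kk i) :=
            mul_le_mul_of_nonneg_right h1 h3
        _ = lam ^ (kfun kk i) * 1 := by ring
        _ ≤ lam ^ (kfun kk i) * (kfun kk i).factorial :=
            mul_le_mul_of_nonneg_left h2 h3
    have step3 : lam ^ s ≤ (2*lam) ^ T * (1/2) ^ s := by
      have h1 : lam ^ s = (2*lam) ^ s * (1/2:ℝ) ^ s := by
        rw [← mul_pow]
        ring_nf
      rw [h1]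
      apply mul_le_mul_of_nonneg_right _ (by positivity)
      have h2 : (2*lam) ^ s = (2*lam) ^ (s:ℝ) := (Real.rpow_natCast _ s).symm
      rw [h2]
      exact Real.rpow_le_rpow_of_exponent_ge h2lam h2lam1 (le_of_lt hkk)
    have step5 : ENNReal.ofReal ((1/2:ℝ) ^ s) = ∏ j : ↥F, ((1:ℝ≥0∞)/2) ^ (kk j) := by
      rw [Finset.prod_pow_eq_pow_sum, ← hsdef]
      rw [ENNReal.ofReal_pow (by norm_num)]
      congr 1
      rw [ENNReal.ofReal_div_of_pos (by norm_num)]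
      norm_num
    calc ∏ j ∈ F, ENNReal.ofReal (poissonPMFR lam (kfun kk j))
        = ENNReal.ofReal (∏ j ∈ F, poissonPMFR lam (kfun kk j)) := step1
      _ ≤ ENNReal.ofReal ((2*lam) ^ T * (1/2) ^ s) :=
          ENNReal.ofReal_le_ofReal (step2.trans step3)
      _ = ENNReal.ofReal ((2*lam) ^ T) * ENNReal.ofReal ((1/2:ℝ) ^ s) :=
          ENNReal.ofReal_mul (Real.rpow_nonneg h2lam.le _)
      _ = ENNReal.ofReal ((2*lam) ^ T) * ∏ j : ↥F, ((1:ℝ≥0∞)/2) ^ (kk j) := by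
          rw [step5]
  -- assemble
  have hmain : μ {ζ | ENNReal.ofReal a < Rad d ζ 0} ≤
      ENNReal.ofReal ((2*lam) ^ T) * 2 ^ F.card := by
    calc μ {ζ | ENNReal.ofReal a < Rad d ζ 0}
        ≤ μ (⋃ p : {kk : ↥F → ℕ // T < ((∑ j, kk j : ℕ) : ℝ)},
            {ζ | ∀ j ∈ F, ζ j = kfun p.1 j}) :=
          measure_mono (hincl.trans hincl2)
      _ ≤ ∑' p : {kk : ↥F → ℕ // T < ((∑ j, kk j : ℕ) : ℝ)},
            μ {ζ | ∀ j ∈ F, ζ j = kfun p.1 j} := measure_iUnion_le _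
      _ ≤ ∑' p : {kk : ↥F → ℕ // T < ((∑ j, kk j : ℕ) : ℝ)},
            ENNReal.ofReal ((2*lam) ^ T) * ∏ j : ↥F, ((1:ℝ≥0∞)/2) ^ (p.1 j) :=
          ENNReal.tsum_le_tsum hterm
      _ = ENNReal.ofReal ((2*lam) ^ T) *
            ∑' p : {kk : ↥F → ℕ // T < ((∑ j, kk j : ℕ) : ℝ)},
              ∏ j : ↥F, ((1:ℝ≥0∞)/2) ^ (p.1 j) := ENNReal.tsum_mul_left
      _ ≤ ENNReal.ofReal ((2*lam) ^ T) *
            ∑' kk : ↥F → ℕ, ∏ j : ↥F, ((1:ℝ≥0∞)/2) ^ (kk j) := by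
          apply mul_le_mul_right
          exact ENNReal.tsum_comp_le_tsum_of_injective Subtype.val_injective
            (fun (kk : ↥F → ℕ) => ∏ j : ↥F, ((1:ℝ≥0∞)/2) ^ (kk j))
      _ = ENNReal.ofReal ((2*lam) ^ T) * 2 ^ F.card := by
          rw [tsum_pi_fintype (fun m => ((1:ℝ≥0∞)/2) ^ m), tsum_half_pow,
            Fintype.card_coe]
  refine hmain.trans ?_
  have h2n : (2:ℝ≥0∞) ^ F.card = ENNReal.ofReal ((2:ℝ) ^ F.card) := by
    rw [ENNReal.ofReal_pow (by norm_num), ENNReal.ofReal_ofNat]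
  rw [h2n, ← ENNReal.ofReal_mul (Real.rpow_nonneg h2lam.le _)]
  apply ENNReal.ofReal_le_ofReal
  -- final real inequality
  have hfinal1 : (2*lam) ^ T ≤ Real.exp (-(C + K * Real.log 2) * a ^ d) := by
    have h1 : (2*lam) ^ T ≤
        (Real.exp (-(C + K * Real.log 2) / unitBallVol d)) ^ T :=
      Real.rpow_le_rpow h2lam.le (by linarith) (by linarith)
    have h2 : (Real.exp (-(C + K * Real.log 2) / unitBallVol d)) ^ T
        = Real.exp ((-(C + K * Real.log 2) / unitBallVol d) * T) := by
      rw [Real.rpow_def_of_pos (Real.exp_pos _), Real.log_exp]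
    rw [h2] at h1
    refine h1.trans (le_of_eq ?_)
    congr 1
    rw [hTdef]
    field_simp
  have hfinal2 : (2:ℝ) ^ F.card ≤ Real.exp ((K * a ^ d) * Real.log 2) := by
    have h1 : (2:ℝ) ^ F.card = Real.exp ((F.card : ℝ) * Real.log 2) := by
      rw [← Real.exp_log (show (0:ℝ) < 2 by norm_num)]
      rw [← Real.exp_nat_mul]
      rw [Real.log_exp]
    rw [h1]
    apply Real.exp_le_exp.mpr
    exact mul_le_mul_of_nonneg_right hcard hlog2.le
  calc (2*lam) ^ T * (2:ℝ) ^ F.card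
      ≤ Real.exp (-(C + K * Real.log 2) * a ^ d) *
          Real.exp ((K * a ^ d) * Real.log 2) :=
        mul_le_mul hfinal1 hfinal2 (by positivity) (Real.exp_nonneg _)
    _ = Real.exp (-(C * a ^ d)) := by
        rw [← Real.exp_add]
        congr 1
        ring
end
end

section
/- Let d ≥ 2, t > 4√d, j, l, i ∈ ℤ^d, and set r₁ = t/(2(β_d + 1)). Suppose that K_l^1 ⊆ {x ∈ ℝ^d : inf_{y ∈ K_j^{3t}} ‖x − y‖_∞ ≤ 2t} and ρ(K_i^1, K_l^1) ≤ r₁. Then B_i(β_d·r₁) ⊆ A(K_j^{3t}). -/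
open MeasureTheory
open scoped ENNReal NNReal

noncomputable section

lemma center_mem_cube {d : ℕ} {m : ℝ} (hm : 0 ≤ m) (a : Fin d → ℤ) :
    (WithLp.toLp 2 (fun c => m * (a c : ℝ)) : EuclideanSpace ℝ (Fin d)) ∈ cube d m a := by
  intro c
  simp only [PiLp.toLp_apply, sub_self, abs_zero]
  linarith

lemma coord_le_dist {d : ℕ} (u v : EuclideanSpace ℝ (Fin d)) (c : Fin d) :
    |u c - v c| ≤ dist u v := by
  rw [EuclideanSpace.dist_eq]
  have h1 : |u c - v c| = Real.sqrt (|u c - v c| ^ 2) :=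
    (Real.sqrt_sq (abs_nonneg _)).symm
  rw [h1]
  apply Real.sqrt_le_sqrt
  have := Finset.single_le_sum (f := fun i => dist (u i) (v i) ^ 2)
    (fun i _ => sq_nonneg _) (Finset.mem_univ c)
  simpa [Real.dist_eq] using this

lemma rho_coord {d : ℕ} (a b : Fin d → ℤ) {r : ℝ}
    (h : rho d (cube d 1 a) (cube d 1 b) ≤ r) (c : Fin d) :
    |(a c : ℝ) - (b c : ℝ)| ≤ r + 1 := by
  have hmema := center_mem_cube (d := d) (m := 1) zero_le_one a
  have hmemb := center_mem_cube (d := d) (m := 1) zero_le_one b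
  have hlb : |(a c : ℝ) - (b c : ℝ)| - 1 ≤ rho d (cube d 1 a) (cube d 1 b) := by
    apply le_csInf ⟨_, Set.mem_image2_of_mem hmema hmemb⟩
    rintro z ⟨u, hu, v, hv, rfl⟩
    have h1 := coord_le_dist u v c
    have h2 := hu c
    have h3 := hv c
    simp only [one_mul] at h2 h3
    have t1 : |(a c : ℝ) - (b c : ℝ)| ≤ |(a c : ℝ) - u c| + |u c - (b c : ℝ)| :=
      abs_sub_le _ _ _
    have t2 : |u c - (b c : ℝ)| ≤ |u c - v c| + |v c - (b c : ℝ)| :=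
      abs_sub_le _ _ _
    have h2' : |(a c : ℝ) - u c| ≤ 1 / 2 := by rw [abs_sub_comm]; simpa using h2
    have h3' : |v c - (b c : ℝ)| ≤ 1 / 2 := by simpa using h3
    linarith
  linarith

lemma betaD_ge_three (d : ℕ) : (3 : ℝ) ≤ betaD d := by
  have h0 : (0 : ℝ) ≤ 2 * Real.sqrt d * (unitBallVol d) ^ ((1 : ℝ) / d) := by
    have := Real.sqrt_nonneg (d : ℝ)
    have h2 : (0 : ℝ) ≤ (unitBallVol d) ^ ((1 : ℝ) / d) :=
      Real.rpow_nonneg ENNReal.toReal_nonneg _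
    positivity
  have := Int.le_ceil (3 + 2 * Real.sqrt d * (unitBallVol d) ^ ((1 : ℝ) / d))
  unfold betaD
  linarith

/-- Let `d ≥ 2`, `t > 4√d`, `j, l, i ∈ ℤ^d`, and set
`r₁ = t/(2(β_d + 1))`. Suppose that
`K_l^1 ⊆ {x ∈ ℝ^d : inf_{y ∈ K_j^{3t}} ‖x − y‖_∞ ≤ 2t}` and
`ρ(K_i^1, K_l^1) ≤ r₁`. Then `B_i(β_d·r₁) ⊆ A(K_j^{3t})`. -/
theorem statement15 (d : ℕ) (hd : 2 ≤ d) (t : ℝ) (ht : 4 * Real.sqrt d < t)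
    (j l i : Fin d → ℤ)
    (hl : cube d 1 l ⊆
      {x | sInf ((fun y => supNorm d (x - y)) '' cube d (3 * t) j) ≤ 2 * t})
    (hi : rho d (cube d 1 i) (cube d 1 l) ≤ t / (2 * (betaD d + 1))) :
    dball d i (betaD d * (t / (2 * (betaD d + 1)))) ⊆ nbhd d (3 * t) j := by
  have hβ : (3 : ℝ) ≤ betaD d := betaD_ge_three d
  have hd2 : (2 : ℝ) ≤ (d : ℝ) := by exact_mod_cast hd
  have hs := Real.sq_sqrt (by positivity : (0 : ℝ) ≤ (d : ℝ))
  have hs0 := Real.sqrt_nonneg (d : ℝ)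
  have ht5 : 5 < t := by nlinarith
  have ht0 : 0 < t := by linarith
  set r₁ := t / (2 * (betaD d + 1)) with hr₁
  have hden : (0 : ℝ) < 2 * (betaD d + 1) := by linarith
  have hr₁pos : 0 < r₁ := div_pos ht0 hden
  have hprod : betaD d * r₁ + r₁ = t / 2 := by
    rw [hr₁]
    field_simp
  intro x hx
  rw [dball, if_pos (mul_pos (by linarith : (0:ℝ) < betaD d) hr₁pos)] at hx
  simp only [Set.mem_iUnion, Set.mem_setOf_eq] at hx
  obtain ⟨m, hm, hxm⟩ := hx
  -- coordinatewise bounds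
  have h4 : ∀ c, |(l c : ℝ) - 3 * t * (j c : ℝ)| ≤ 2 * t + 3 * t / 2 := by
    intro c
    have hx₀ := center_mem_cube (d := d) (m := 1) zero_le_one l
    have hInf := hl hx₀
    simp only [Set.mem_setOf_eq] at hInf
    set x₀ : EuclideanSpace ℝ (Fin d) := WithLp.toLp 2 (fun c => (1 : ℝ) * (l c : ℝ)) with hx₀def
    have hcj := center_mem_cube (d := d) (m := 3 * t) (by linarith) j
    have hne : ((fun y => supNorm d (x₀ - y)) '' cube d (3 * t) j).Nonempty :=
      ⟨_, Set.mem_image_of_mem _ hcj⟩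
    have hlb : |(l c : ℝ) - 3 * t * (j c : ℝ)| - 3 * t / 2 ≤
        sInf ((fun y => supNorm d (x₀ - y)) '' cube d (3 * t) j) := by
      apply le_csInf hne
      rintro z ⟨y, hy, rfl⟩
      have hyc := hy c
      have hsup : |(x₀ - y) c| ≤ supNorm d (x₀ - y) :=
        le_ciSup (f := fun l => |(x₀ - y) l|)
          (Set.Finite.bddAbove (Set.finite_range _)) c
      have hsub : (x₀ - y) c = (l c : ℝ) - y c := by
        simp [hx₀def, PiLp.sub_apply]
      rw [hsub] at hsup
      have t1 : |(l c : ℝ) - 3 * t * (j c : ℝ)| ≤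
          |(l c : ℝ) - y c| + |y c - 3 * t * (j c : ℝ)| := abs_sub_le _ _ _
      linarith
    linarith
  have key : ∀ c, |x c - 3 * t * (j c : ℝ)| ≤ 9 * t / 2 := by
    intro c
    have h1 := hxm c
    simp only [one_mul] at h1
    have h2 := rho_coord i m hm c
    have h3 := rho_coord i l hi c
    have h4c := h4 c
    have h2' : |(m c : ℝ) - (i c : ℝ)| ≤ betaD d * r₁ + 1 := by
      rw [abs_sub_comm]; exact h2
    have A : |x c - 3 * t * (j c : ℝ)| ≤
        |x c - (m c : ℝ)| + |(m c : ℝ) - 3 * t * (j c : ℝ)| := abs_sub_le _ _ _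
    have B : |(m c : ℝ) - 3 * t * (j c : ℝ)| ≤
        |(m c : ℝ) - (i c : ℝ)| + |(i c : ℝ) - 3 * t * (j c : ℝ)| := abs_sub_le _ _ _
    have C : |(i c : ℝ) - 3 * t * (j c : ℝ)| ≤
        |(i c : ℝ) - (l c : ℝ)| + |(l c : ℝ) - 3 * t * (j c : ℝ)| := abs_sub_le _ _ _
    linarith
  -- construct the neighbour index
  classical
  set e : Fin d → ℤ := fun c =>
    if 3 * t * (j c : ℝ) + 3 * t / 2 < x c then 1
    else if x c < 3 * t * (j c : ℝ) - 3 * t / 2 then -1 else 0 with he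
  simp only [nbhd, Set.mem_iUnion, Set.mem_setOf_eq]
  refine ⟨j + e, ?_, ?_⟩
  · have : (j + e) - j = e := by ring
    rw [this]
    rw [pi_norm_le_iff_of_nonneg zero_le_one]
    intro c
    rw [Int.norm_eq_abs]
    simp only [he]
    split_ifs <;> norm_num
  · intro c
    have hk := (abs_le.mp (key c))
    have hcast : ((j + e) c : ℝ) = (j c : ℝ) + (e c : ℝ) := by
      push_cast [Pi.add_apply]; ring
    rw [hcast]
    simp only [he]
    split_ifs with h1 h2
    · rw [abs_le]; push_cast; constructor <;> linarith [hk.1, hk.2]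
    · rw [abs_le]; push_cast; constructor <;> linarith [hk.1, hk.2]
    · rw [abs_le]; push_cast; push_neg at h1 h2
      constructor <;> linarith
end
end
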